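/- Let (X_k) be a bounded sequence of vectors in ℝ^d, A₀ positive definite, A_k = A₀ + ∑_{i=1}^k X_i X_iᵀ. Then ∑_{k=1}^∞ (X_kᵀ A_{k-1}⁻¹ X_k)² < ∞. -/

import Mathlib

open Matrix Finset

variable {d : ℕ}

lemma my_vecMulVec_mulVec (w v u : Fin d → ℝ) :
    vecMulVec w v *ᵥ u = (v ⬝ᵥ u) • w := by
  ext i
  simp [vecMulVec_apply, mulVec, dotProduct, Finset.mul_sum, mul_comm, mul_assoc, mul_left_comm]

lemma my_trace_vecMulVec (u v : Fin d → ℝ) : trace (vecMulVec u v) = u ⬝ᵥ v := by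
  simp [trace, vecMulVec_apply, dotProduct, Matrix.diag]

lemma my_vecMulVec_symm_herm (x : Fin d → ℝ) : (vecMulVec x x).IsHermitian := by
  ext i j
  simp [vecMulVec_apply, mul_comm]

lemma my_vecMulVec_posSemidef (x : Fin d → ℝ) : (vecMulVec x x).PosSemidef := by
  refine PosSemidef.of_dotProduct_mulVec_nonneg (my_vecMulVec_symm_herm x) fun y => ?_
  rw [my_vecMulVec_mulVec]
  simp only [star_trivial, dotProduct_smul]
  rw [smul_eq_mul, dotProduct_comm]
  exact mul_self_nonneg _

lemma my_dot_sq_le (v w : Fin d → ℝ) : (v ⬝ᵥ w) ^ 2 ≤ (v ⬝ᵥ v) * (w ⬝ᵥ w) := by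
  simpa [dotProduct, pow_two] using
    Finset.sum_mul_sq_le_sq_mul_sq Finset.univ v w

lemma my_sym_mulVec {S : Matrix (Fin d) (Fin d) ℝ} (hS : S.IsHermitian) (x v : Fin d → ℝ) :
    x ⬝ᵥ S *ᵥ v = (S *ᵥ x) ⬝ᵥ v := by
  rw [Matrix.dotProduct_mulVec, ← Matrix.mulVec_transpose]
  congr 1
  rw [← conjTranspose_eq_transpose_of_trivial, hS.eq]

section
open scoped MatrixOrder
lemma my_sqrt {S : Matrix (Fin d) (Fin d) ℝ} (hS : S.PosSemidef) :
    ∃ R : Matrix (Fin d) (Fin d) ℝ, R.PosSemidef ∧ R * R = S :=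
  ⟨CFC.sqrt S, (CFC.sqrt_nonneg S).posSemidef, CFC.sqrt_mul_sqrt_self S hS.nonneg⟩
end

/-- Generalized Cauchy-Schwarz w.r.t. a PSD matrix. -/
lemma my_psd_cs {S : Matrix (Fin d) (Fin d) ℝ} (hS : S.PosSemidef) (u w : Fin d → ℝ) :
    (u ⬝ᵥ S *ᵥ w) ^ 2 ≤ (u ⬝ᵥ S *ᵥ u) * (w ⬝ᵥ S *ᵥ w) := by
  obtain ⟨R, hR, hmul⟩ := my_sqrt hS
  have key : ∀ a b : Fin d → ℝ, a ⬝ᵥ S *ᵥ b = (R *ᵥ a) ⬝ᵥ (R *ᵥ b) := by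
    intro a b
    rw [← hmul, ← Matrix.mulVec_mulVec, my_sym_mulVec hR.isHermitian]
  rw [key, key, key]
  exact my_dot_sq_le _ _

/-- Quadratic form bounded by trace times norm squared, for PSD matrices. -/
lemma my_psd_quad_le_trace {S : Matrix (Fin d) (Fin d) ℝ} (hS : S.PosSemidef) (x : Fin d → ℝ) :
    x ⬝ᵥ S *ᵥ x ≤ trace S * (x ⬝ᵥ x) := by
  obtain ⟨R, hR, hmul⟩ := my_sqrt hS
  have h1 : x ⬝ᵥ S *ᵥ x = (R *ᵥ x) ⬝ᵥ (R *ᵥ x) := by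
    rw [← hmul, ← Matrix.mulVec_mulVec, my_sym_mulVec hR.isHermitian]
  have hRsym : ∀ i j, R i j = R j i := by
    intro i j
    have h := congrFun (congrFun hR.isHermitian.eq i) j
    simp only [Matrix.conjTranspose_apply, star_trivial] at h
    exact h.symm
  have h2 : (R *ᵥ x) ⬝ᵥ (R *ᵥ x) ≤ (∑ i, ∑ j, R i j ^ 2) * (x ⬝ᵥ x) := by
    rw [dotProduct, Finset.sum_mul]
    apply Finset.sum_le_sum
    intro i _
    have := Finset.sum_mul_sq_le_sq_mul_sq Finset.univ (fun j => R i j) x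
    simpa [mulVec, dotProduct, pow_two] using this
  have h3 : (∑ i, ∑ j : Fin d, R i j ^ 2) = trace S := by
    rw [← hmul, trace]
    simp only [Matrix.diag, Matrix.mul_apply]
    congr 1; ext i; congr 1; ext j
    rw [pow_two, hRsym j i]
  rw [h1]; rw [h3] at h2; exact h2

/-- Loewner monotonicity of the inverse quadratic form. -/
lemma my_inv_quad_mono {Amat Bmat : Matrix (Fin d) (Fin d) ℝ}
    (hA : Amat.PosDef) (hB : Bmat.PosDef) (hAB : (Amat - Bmat).PosSemidef) (x : Fin d → ℝ) :
    x ⬝ᵥ Amat⁻¹ *ᵥ x ≤ x ⬝ᵥ Bmat⁻¹ *ᵥ x := by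
  set u := Amat⁻¹ *ᵥ x with hu
  set w := Bmat⁻¹ *ᵥ x with hw
  have hdA : IsUnit Amat.det := hA.det_pos.ne'.isUnit
  have hdB : IsUnit Bmat.det := hB.det_pos.ne'.isUnit
  have hAx : Amat *ᵥ u = x := by
    rw [hu, Matrix.mulVec_mulVec, Matrix.mul_nonsing_inv _ hdA, Matrix.one_mulVec]
  have hBw : Bmat *ᵥ w = x := by
    rw [hw, Matrix.mulVec_mulVec, Matrix.mul_nonsing_inv _ hdB, Matrix.one_mulVec]
  set s := x ⬝ᵥ u with hs
  show s ≤ x ⬝ᵥ w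
  have huAu : u ⬝ᵥ Amat *ᵥ u = s := by rw [hAx, hs, dotProduct_comm]
  have huBu_le : u ⬝ᵥ Bmat *ᵥ u ≤ s := by
    have h0 : 0 ≤ u ⬝ᵥ (Amat - Bmat) *ᵥ u := by simpa using hAB.dotProduct_mulVec_nonneg u
    rw [Matrix.sub_mulVec, dotProduct_sub] at h0
    linarith [huAu]
  have huBu_nn : 0 ≤ u ⬝ᵥ Bmat *ᵥ u := by simpa using hB.posSemidef.dotProduct_mulVec_nonneg u
  have hwBw : w ⬝ᵥ Bmat *ᵥ w = w ⬝ᵥ x := by rw [hBw]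
  have hwx_nn : 0 ≤ w ⬝ᵥ x := by
    rw [← hwBw]; simpa using hB.posSemidef.dotProduct_mulVec_nonneg w
  have hseq : s = u ⬝ᵥ Bmat *ᵥ w := by rw [hBw, hs, dotProduct_comm]
  have hcs := my_psd_cs hB.posSemidef u w
  rw [← hseq, hwBw] at hcs
  have key : s ≤ w ⬝ᵥ x := by
    rcases le_or_gt s 0 with h | h
    · exact h.trans hwx_nn
    · nlinarith [hcs, huBu_le, huBu_nn, hwx_nn]
  rw [dotProduct_comm x w]
  exact key


lemma my_psd_trace_nonneg {S : Matrix (Fin d) (Fin d) ℝ} (hS : S.PosSemidef) :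
    0 ≤ trace S := by
  rw [trace]
  apply Finset.sum_nonneg
  intro i _
  have h := hS.dotProduct_mulVec_nonneg (Pi.single i 1)
  simpa [Matrix.mulVec_single, dotProduct, Pi.single_apply, Matrix.diag] using h

lemma my_mul_vecMulVec_mul (P Q : Matrix (Fin d) (Fin d) ℝ) (x y : Fin d → ℝ) :
    P * vecMulVec x y * Q = vecMulVec (P *ᵥ x) (Qᵀ *ᵥ y) := by
  ext i j
  simp only [Matrix.mul_apply, vecMulVec_apply, mulVec, dotProduct, Matrix.transpose_apply,
    Finset.sum_mul, Finset.mul_sum]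
  apply Finset.sum_congr rfl
  intro p _
  apply Finset.sum_congr rfl
  intro q _
  ring

lemma my_step {M M' : Matrix (Fin d) (Fin d) ℝ} (hM : M.PosDef) (x : Fin d → ℝ)
    (hrec : M' = M + vecMulVec x x) :
    0 ≤ trace M⁻¹ - trace M'⁻¹ ∧
      (x ⬝ᵥ M⁻¹ *ᵥ x) ^ 2 ≤
        (x ⬝ᵥ x) * (1 + x ⬝ᵥ M⁻¹ *ᵥ x) * (trace M⁻¹ - trace M'⁻¹) := by
  have hM' : M'.PosDef := by
    rw [hrec]; exact hM.add_posSemidef (my_vecMulVec_posSemidef x)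
  have hdM : IsUnit M.det := hM.det_pos.ne'.isUnit
  have hdM' : IsUnit M'.det := hM'.det_pos.ne'.isUnit
  set N := M⁻¹ with hN
  set v := N *ᵥ x with hv
  set a := x ⬝ᵥ N *ᵥ x with ha
  have ha_nn : 0 ≤ a := by simpa using hM.inv.posSemidef.dotProduct_mulVec_nonneg x
  have h1a : (0:ℝ) < 1 + a := by linarith
  have hav : a = x ⬝ᵥ v := rfl
  have claim1 : M' *ᵥ v = (1 + a) • x := by
    rw [hrec, Matrix.add_mulVec, my_vecMulVec_mulVec, hv, Matrix.mulVec_mulVec,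
      Matrix.mul_nonsing_inv _ hdM, Matrix.one_mulVec, add_smul, one_smul]
  have claim2 : M'⁻¹ *ᵥ x = (1 + a)⁻¹ • v := by
    have h := congrArg (fun y => M'⁻¹ *ᵥ y) claim1
    simp only [Matrix.mulVec_mulVec, Matrix.mulVec_smul] at h
    rw [Matrix.nonsing_inv_mul _ hdM', Matrix.one_mulVec] at h
    rw [h, smul_smul, inv_mul_cancel₀ h1a.ne', one_smul]
  have hNsymm : Nᵀ = N := by
    rw [← conjTranspose_eq_transpose_of_trivial, hM.inv.isHermitian.eq]
  have claim3 : N - M'⁻¹ = M'⁻¹ * vecMulVec x x * N := by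
    have h1 : M' - M = vecMulVec x x := by rw [hrec]; abel
    rw [← h1, Matrix.mul_sub, Matrix.nonsing_inv_mul _ hdM', Matrix.sub_mul, Matrix.one_mul,
      Matrix.mul_assoc, hN, Matrix.mul_nonsing_inv _ hdM, Matrix.mul_one]
  have claim5 : trace N - trace M'⁻¹ = (1 + a)⁻¹ * (v ⬝ᵥ v) := by
    rw [← Matrix.trace_sub, claim3, my_mul_vecMulVec_mul, hNsymm, my_trace_vecMulVec, claim2,
      smul_dotProduct, smul_eq_mul]
  have hvv_nn : 0 ≤ v ⬝ᵥ v := by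
    simpa [dotProduct, pow_two] using Finset.sum_nonneg
      (fun i (_ : i ∈ Finset.univ) => mul_self_nonneg (v i))
  constructor
  · rw [claim5]
    positivity
  · have hcs : a ^ 2 ≤ (x ⬝ᵥ x) * (v ⬝ᵥ v) := by
      rw [hav]; exact my_dot_sq_le x v
    have heq : x ⬝ᵥ x * (1 + a) * ((1 + a)⁻¹ * (v ⬝ᵥ v)) = (x ⬝ᵥ x) * (v ⬝ᵥ v) := by
      field_simp
    rw [claim5, heq]
    exact hcs

open Matrix in
theorem guo_square_summable (d : ℕ) (A₀ : Matrix (Fin d) (Fin d) ℝ)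
    (hA₀ : A₀.PosDef) (X : ℕ → Fin d → ℝ)
    (hX : ∃ B : ℝ, ∀ k, ‖X k‖ ≤ B)
    (A : ℕ → Matrix (Fin d) (Fin d) ℝ)
    (hA0 : A 0 = A₀)
    (hrec : ∀ k : ℕ, A (k + 1) = A k + vecMulVec (X (k + 1)) (X (k + 1))) :
    Summable (fun k : ℕ => (X (k + 1) ⬝ᵥ (A k)⁻¹ *ᵥ X (k + 1)) ^ 2) := by
  obtain ⟨B, hB⟩ := hX
  have hBnn : 0 ≤ B := (norm_nonneg (X 0)).trans (hB 0)
  have hpd : ∀ k, (A k).PosDef := by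
    intro k
    induction k with
    | zero => rw [hA0]; exact hA₀
    | succ k ih => rw [hrec k]; exact ih.add_posSemidef (my_vecMulVec_posSemidef _)
  have hdiff : ∀ k, ((A k) - A 0).PosSemidef := by
    intro k
    induction k with
    | zero => simpa using Matrix.PosSemidef.zero
    | succ k ih =>
        have : A (k+1) - A 0 = (A k - A 0) + vecMulVec (X (k+1)) (X (k+1)) := by
          rw [hrec k]; abel
        rw [this]
        exact ih.add (my_vecMulVec_posSemidef _)
  have hxx : ∀ k, X k ⬝ᵥ X k ≤ (d : ℝ) * B ^ 2 := by
    intro k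
    have : X k ⬝ᵥ X k = ∑ i, X k i * X k i := rfl
    rw [this]
    calc ∑ i, X k i * X k i ≤ ∑ _i : Fin d, B ^ 2 := by
          apply Finset.sum_le_sum
          intro i _
          have h1 : |X k i| ≤ B := by
            have := norm_le_pi_norm (X k) i
            rw [Real.norm_eq_abs] at this
            exact this.trans (hB k)
          have h2 : X k i ≤ B := (le_abs_self _).trans h1
          have h3 : -B ≤ X k i := by
            have := neg_abs_le (X k i)
            linarith [abs_le.mp h1 |>.1]
          nlinarith
      _ = (d : ℝ) * B ^ 2 := by
          rw [Finset.sum_const, Finset.card_univ, Fintype.card_fin, nsmul_eq_mul]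
  have hxx_nn : ∀ k, 0 ≤ X k ⬝ᵥ X k := by
    intro k
    exact Finset.sum_nonneg fun i _ => mul_self_nonneg (X k i)
  have hdB2 : (0:ℝ) ≤ (d : ℝ) * B ^ 2 := by positivity
  set C : ℝ := trace (A 0)⁻¹ * ((d : ℝ) * B ^ 2) with hC
  have htr0_nn : 0 ≤ trace (A 0)⁻¹ := my_psd_trace_nonneg (hpd 0).inv.posSemidef
  have hC_nn : 0 ≤ C := mul_nonneg htr0_nn hdB2
  set a : ℕ → ℝ := fun k => X (k + 1) ⬝ᵥ (A k)⁻¹ *ᵥ X (k + 1) with haf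
  have ha_nn : ∀ k, 0 ≤ a k := fun k => by simpa using (hpd k).inv.posSemidef.dotProduct_mulVec_nonneg (X (k+1))
  have haC : ∀ k, a k ≤ C := by
    intro k
    have h1 : a k ≤ X (k+1) ⬝ᵥ (A 0)⁻¹ *ᵥ X (k+1) :=
      my_inv_quad_mono (hpd k) (hpd 0) (hdiff k) (X (k+1))
    have h2 : X (k+1) ⬝ᵥ (A 0)⁻¹ *ᵥ X (k+1) ≤ trace (A 0)⁻¹ * (X (k+1) ⬝ᵥ X (k+1)) :=
      my_psd_quad_le_trace (hpd 0).inv.posSemidef (X (k+1))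
    have h3 : trace (A 0)⁻¹ * (X (k+1) ⬝ᵥ X (k+1)) ≤ C :=
      mul_le_mul_of_nonneg_left (hxx (k+1)) htr0_nn
    linarith
  set g : ℕ → ℝ := fun k => trace (A k)⁻¹ with hg
  set K : ℝ := (d : ℝ) * B ^ 2 * (1 + C) with hK
  have hK_nn : 0 ≤ K := by positivity
  have key : ∀ k, a k ^ 2 ≤ K * (g k - g (k + 1)) := by
    intro k
    obtain ⟨hDnn, hstep⟩ := my_step (hpd k) (X (k+1)) (hrec k)
    have h1 : X (k+1) ⬝ᵥ X (k+1) * (1 + a k) ≤ (d : ℝ) * B ^ 2 * (1 + C) := by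
      apply mul_le_mul (hxx (k+1)) (by linarith [haC k]) (by linarith [ha_nn k]) hdB2
    calc a k ^ 2 ≤ X (k+1) ⬝ᵥ X (k+1) * (1 + a k) * (g k - g (k+1)) := hstep
      _ ≤ K * (g k - g (k+1)) := mul_le_mul_of_nonneg_right h1 hDnn
  have hgn_nn : ∀ n, 0 ≤ g n := fun n => my_psd_trace_nonneg (hpd n).inv.posSemidef
  apply summable_of_sum_range_le (c := K * g 0) (fun n => sq_nonneg _)
  intro n
  calc ∑ k ∈ Finset.range n, a k ^ 2
      ≤ ∑ k ∈ Finset.range n, K * (g k - g (k + 1)) :=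
        Finset.sum_le_sum fun k _ => key k
    _ = K * (g 0 - g n) := by rw [← Finset.mul_sum, Finset.sum_range_sub' g n]
    _ ≤ K * g 0 := by nlinarith [hgn_nn n, hK_nn]
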